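/- Let q be a prime power, G = PSL(2,q), and let n > 1 be an integer with gcd(n, 2q) = 1 and n not a prime power. Let u be a unit of augmentation 1 and order n in ℤG, let g₀ ∈ G be an element of order n, and let ζ be a primitive n-th complex root of unity. Let Γ_n be a set of representatives of the relation x ∼_n y ⟺ x ≡ ±y (mod n) on ℤ, write ε_x = ε_{g₀^x}(u) for x ∈ Γ_n, and for each integer i set λ_i = Σ_{x∈Γ_n} ε_x (ζ^{ix} + ζ^{−ix}) and α_i = ζ^i + ζ^{−i}. Let d be a divisor of n such that λ_{d/q'} = α_{d/q'} for every prime power q' ≠ 1 dividing d. Then λ_d − α_d ∈ d·ℤ[ζ + ζ^{−1}]. -/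

import Mathlib

open scoped MatrixGroups
open scoped Classical

/-- The partial augmentation `ε_g(α)` of `α ∈ ℤG` at `g ∈ G`: the sum of the
coefficients of `α` over the conjugacy class of `g`. -/
noncomputable def partialAug {G : Type*} [Group G] (α : MonoidAlgebra ℤ G) (g : G) : ℤ :=
  α.coeff.sum fun h c => if IsConj g h then c else 0

/-- The augmentation (sum of coefficients) of an element of `ℤG`. -/
noncomputable def aug {G : Type*} [Group G] (α : MonoidAlgebra ℤ G) : ℤ :=
  α.coeff.sum fun _ c => c

open Polynomial in
private lemma cyclo_pow_expand (q m : ℕ) (hq : q.Prime) (a : ℕ) :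
    Polynomial.cyclotomic (q ^ a * (q * m)) ℤ
      = Polynomial.expand ℤ (q ^ a) (Polynomial.cyclotomic (q * m) ℤ) := by
  induction a with
  | zero => simp
  | succ a ih =>
    have hdvd : q ∣ q ^ a * (q * m) := ⟨q ^ a * m, by ring⟩
    have h1 : q ^ (a + 1) * (q * m) = (q ^ a * (q * m)) * q := by ring
    rw [h1, ← cyclotomic_expand_eq_cyclotomic hq hdvd ℤ, ih, expand_expand]
    congr 1
    ring

open Polynomial in
/-- If `q^k ∣ N` with `k ≥ 1`, then `Φ_N(μ^{q^k})` is divisible by `q` in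
`ℤ[μ^{q^k}]`, where `μ` is a primitive `N`-th root of unity. -/
private lemma cyclotomic_aeval_pow_dvd (q N k : ℕ) (hq : q.Prime) (hN : 0 < N)
    (hk : 1 ≤ k) (hdvd : q ^ k ∣ N) (μ : ℂ) (hμ : IsPrimitiveRoot μ N) :
    ∃ s ∈ Algebra.adjoin ℤ ({μ ^ q ^ k} : Set ℂ),
      Polynomial.aeval (μ ^ q ^ k) (Polynomial.cyclotomic N ℤ) = (q : ℂ) * s := by
  haveI : Fact q.Prime := ⟨hq⟩
  set w := N.factorization q with hw
  set m := ordCompl[q] N with hm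
  have hNw : N = q ^ w * m := (Nat.ordProj_mul_ordCompl_eq_self N q).symm
  have hqm : ¬ q ∣ m := Nat.not_dvd_ordCompl hq hN.ne'
  have hwk : k ≤ w := (Nat.Prime.pow_dvd_iff_le_factorization hq hN.ne').mp hdvd
  have hw1 : 1 ≤ w := le_trans hk hwk
  have hm0 : 0 < m := Nat.ordCompl_pos q hN.ne'
  -- the cyclotomic polynomial as expand of Φ_{q m}
  have hcy : Polynomial.cyclotomic N ℤ
      = Polynomial.expand ℤ (q ^ (w - 1)) (Polynomial.cyclotomic (q * m) ℤ) := by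
    have : N = q ^ (w - 1) * (q * m) := by
      rw [hNw, ← mul_assoc, ← pow_succ]
      congr 2
      omega
    rw [this]
    exact cyclo_pow_expand q m hq (w - 1)
  set y : ℂ := μ ^ q ^ k with hy
  have haev : Polynomial.aeval y (Polynomial.cyclotomic N ℤ)
      = Polynomial.aeval (y ^ q ^ (w - 1)) (Polynomial.cyclotomic (q * m) ℤ) := by
    rw [hcy, Polynomial.expand_aeval]
  set η : ℂ := y ^ q ^ (w - 1) with hη
  have hηpow : η = (μ ^ q ^ w) ^ q ^ (k - 1) := by
    rw [hη, hy, ← pow_mul, ← pow_mul, ← pow_add, ← pow_add]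
    congr 2
    omega
  have hμw : IsPrimitiveRoot (μ ^ q ^ w) m := hμ.pow hN hNw
  have hηprim : IsPrimitiveRoot η m := by
    rw [hηpow]
    exact hμw.pow_of_coprime _ (((Nat.Prime.coprime_iff_not_dvd hq).mpr hqm).pow_left _)
  -- the congruence Φ_{mq} ≡ Φ_m^{q-1} mod q
  have hcong : Polynomial.map (Int.castRingHom (ZMod q))
      (Polynomial.cyclotomic (m * q) ℤ - (Polynomial.cyclotomic m ℤ) ^ (q - 1)) = 0 := by
    rw [Polynomial.map_sub, Polynomial.map_pow, Polynomial.map_cyclotomic_int,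
      Polynomial.map_cyclotomic_int,
      Polynomial.cyclotomic_mul_prime_eq_pow_of_not_dvd (ZMod q) hqm, sub_self]
  have hCdvd : Polynomial.C (q : ℤ) ∣
      (Polynomial.cyclotomic (m * q) ℤ - (Polynomial.cyclotomic m ℤ) ^ (q - 1)) := by
    rw [Polynomial.C_dvd_iff_dvd_coeff]
    intro i
    have := congrArg (fun P => Polynomial.coeff P i) hcong
    simp only [Polynomial.coeff_map, Polynomial.coeff_zero] at this
    exact_mod_cast (ZMod.intCast_zmod_eq_zero_iff_dvd _ q).mp this
  obtain ⟨g, hg⟩ := hCdvd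
  have hgeq : Polynomial.cyclotomic (m * q) ℤ
      = (Polynomial.cyclotomic m ℤ) ^ (q - 1) + Polynomial.C (q : ℤ) * g := by
    rw [← hg]; ring
  -- η is a root of Φ_m
  have hroot : Polynomial.aeval η (Polynomial.cyclotomic m ℤ) = 0 := by
    have := hηprim.isRoot_cyclotomic hm0 (R := ℂ)
    rw [Polynomial.IsRoot.def] at this
    rw [Polynomial.aeval_def, Polynomial.eval₂_eq_eval_map, Polynomial.map_cyclotomic]
    exact this
  refine ⟨Polynomial.aeval η g, ?_, ?_⟩
  · have hmem : Polynomial.aeval η g ∈ Algebra.adjoin ℤ ({η} : Set ℂ) :=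
      Polynomial.aeval_mem_adjoin_singleton ℤ η
    have hle : Algebra.adjoin ℤ ({η} : Set ℂ) ≤ Algebra.adjoin ℤ ({y} : Set ℂ) := by
      apply Algebra.adjoin_le
      rw [Set.singleton_subset_iff]
      exact pow_mem (Algebra.subset_adjoin (Set.mem_singleton y)) _
    exact hle hmem
  · rw [haev, show q * m = m * q from mul_comm q m, hgeq]
    rw [map_add, map_mul, map_pow, hroot, Polynomial.aeval_C]
    have : (0 : ℂ) ^ (q - 1) = 0 := by
      have := hq.two_le
      exact zero_pow (by omega)
    rw [this, zero_add]
    push_cast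
    ring

open Polynomial in
/-- Key induction: if an integer polynomial vanishes at `μ^{q^j}` for all `j < v`,
then its value at `μ^{q^v}` is divisible by `q^v` in `ℤ[μ^{q^v}]`. -/
private lemma key_induction : ∀ (v q : ℕ), q.Prime → ∀ (N : ℕ), 0 < N → q ^ v ∣ N →
    ∀ (μ : ℂ), IsPrimitiveRoot μ N → ∀ (h : Polynomial ℤ),
    (∀ j < v, Polynomial.aeval (μ ^ q ^ j) h = 0) →
    ∃ s ∈ Algebra.adjoin ℤ ({μ ^ q ^ v} : Set ℂ),
      Polynomial.aeval (μ ^ q ^ v) h = (q : ℂ) ^ v * s := by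
  intro v
  induction v with
  | zero =>
    intro q hq N hN hdvd μ hμ h _
    exact ⟨Polynomial.aeval (μ ^ q ^ 0) h, Polynomial.aeval_mem_adjoin_singleton ℤ _, by
      simp⟩
  | succ v ih =>
    intro q hq N hN hdvd μ hμ h hvan
    have hq1 : 1 < q := hq.one_lt
    have hqN : q ∣ N := dvd_trans (dvd_pow_self q (Nat.succ_ne_zero v)) hdvd
    -- h vanishes at μ, so Φ_N ∣ h
    have h0 : Polynomial.aeval μ h = 0 := by
      have := hvan 0 (Nat.succ_pos v)
      simpa using this
    have hmin : Polynomial.cyclotomic N ℤ = minpoly ℤ μ := Polynomial.cyclotomic_eq_minpoly hμ hN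
    have hdvd_h : Polynomial.cyclotomic N ℤ ∣ h := by
      rw [hmin]
      exact minpoly.isIntegrallyClosed_dvd (hμ.isIntegral hN) h0
    obtain ⟨h₁, hh₁⟩ := hdvd_h
    -- ν = μ^q is a primitive (N/q)-th root of unity
    set M := N / q with hM
    have hNM : N = q * M := (Nat.mul_div_cancel' hqN).symm
    have hM0 : 0 < M := by
      rcases Nat.eq_zero_or_pos M with h | h
      · rw [h, mul_zero] at hNM; omega
      · exact h
    set ν : ℂ := μ ^ q with hν
    have hνprim : IsPrimitiveRoot ν M := hμ.pow hN hNM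
    have hqvM : q ^ v ∣ M := by
      have : q * q ^ v ∣ q * M := by
        rw [← hNM, ← pow_succ']
        exact hdvd
      exact (mul_dvd_mul_iff_left (by omega : q ≠ 0)).mp this
    -- h₁ vanishes at ν^{q^j} for j < v
    have hvan₁ : ∀ j < v, Polynomial.aeval (ν ^ q ^ j) h₁ = 0 := by
      intro j hj
      have hpt : (ν ^ q ^ j : ℂ) = μ ^ q ^ (j + 1) := by
        rw [hν, ← pow_mul, ← pow_succ']
      have hvn : Polynomial.aeval (μ ^ q ^ (j + 1)) h = 0 := hvan (j + 1) (by omega)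
      rw [hh₁, map_mul] at hvn
      have hΦne : Polynomial.aeval (μ ^ q ^ (j + 1)) (Polynomial.cyclotomic N ℤ) ≠ 0 := by
        -- μ^{q^{j+1}} is a primitive (N / q^{j+1})-th root, and N / q^{j+1} ≠ N
        have hdvd' : q ^ (j + 1) ∣ N := dvd_trans (pow_dvd_pow q (by omega)) hdvd
        have hNj : N = q ^ (j + 1) * (N / q ^ (j + 1)) := (Nat.mul_div_cancel' hdvd').symm
        have hprim' : IsPrimitiveRoot (μ ^ q ^ (j + 1)) (N / q ^ (j + 1)) := hμ.pow hN hNj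
        have hne : N / q ^ (j + 1) ≠ N := by
          have : N / q ^ (j + 1) < N :=
            Nat.div_lt_self hN (Nat.one_lt_pow (by omega) hq1)
          omega
        intro hzero
        haveI : NeZero (N : ℂ) := ⟨by exact_mod_cast (by omega : (N : ℤ) ≠ 0)⟩
        have : Polynomial.IsRoot (Polynomial.cyclotomic N ℂ) (μ ^ q ^ (j + 1)) := by
          rw [Polynomial.IsRoot.def]
          rw [Polynomial.aeval_def, Polynomial.eval₂_eq_eval_map, Polynomial.map_cyclotomic]
            at hzero
          exact hzero
        rw [Polynomial.isRoot_cyclotomic_iff] at this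
        exact hne (hprim'.unique this)
      have := mul_eq_zero.mp hvn
      rcases this with h' | h'
      · exact absurd h' hΦne
      · rw [← hpt] at h'
        exact h'
    obtain ⟨s₁, hs₁mem, hs₁⟩ := ih q hq M hM0 hqvM ν hνprim h₁ hvan₁
    obtain ⟨s₂, hs₂mem, hs₂⟩ :=
      cyclotomic_aeval_pow_dvd q N (v + 1) hq hN (by omega) hdvd μ hμ
    have hpt2 : (ν ^ q ^ v : ℂ) = μ ^ q ^ (v + 1) := by
      rw [hν, ← pow_mul, ← pow_succ']
    rw [hpt2] at hs₁ hs₁mem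
    refine ⟨s₂ * s₁, mul_mem hs₂mem hs₁mem, ?_⟩
    rw [hh₁, map_mul, hs₂, hs₁]
    ring

private lemma zpow_int_mod (y : ℂ) (n : ℕ) (hn : 0 < n) (hy : y ^ n = 1) (t : ℤ) :
    y ^ t = y ^ ((t % (n : ℤ)).toNat) := by
  have hy0 : y ≠ 0 := by
    intro h
    rw [h, zero_pow hn.ne'] at hy
    exact zero_ne_one hy
  have hnz : (n : ℤ) ≠ 0 := by exact_mod_cast hn.ne'
  have hmod : ((t % (n : ℤ)).toNat : ℤ) = t % (n : ℤ) :=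
    Int.toNat_of_nonneg (Int.emod_nonneg t hnz)
  conv_lhs => rw [show t = (n : ℤ) * (t / (n : ℤ)) + t % (n : ℤ) from (Int.mul_ediv_add_emod t n).symm]
  rw [zpow_add₀ hy0, zpow_mul, ← hmod, zpow_natCast, zpow_natCast]
  norm_cast
  rw [hy, one_zpow, one_mul]

/-- **Key congruence.** Let `G = PSL(2,q)`, `q = p^f`, let `n > 1` with
`gcd(n, 2q) = 1` and `n` not a prime power, let `u` be a normalized unit of order
`n` in `ℤG`, `g₀ ∈ G` of order `n`, `ζ` a primitive `n`-th complex root of unity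
and `Γ` a set of representatives of `x ≡ ±y (mod n)` on `ℤ`.  With
`ε_x = ε_{g₀^x}(u)`, `λ_i = Σ_{x∈Γ} ε_x (ζ^{ix} + ζ^{−ix})` and
`α_i = ζ^i + ζ^{−i}`, if `d ∣ n` and `λ_{d/q'} = α_{d/q'}` for every prime power
`q' ≠ 1` dividing `d`, then `λ_d − α_d ∈ d·ℤ[ζ + ζ^{−1}]`. -/
theorem lambda_sub_alpha_mem (p f : ℕ) [Fact p.Prime] (hf : 0 < f)
    (n : ℕ) (hn : 1 < n) (hcop : Nat.gcd n (2 * p ^ f) = 1)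
    (hnpp : ¬ IsPrimePow n)
    (u : (MonoidAlgebra ℤ (Matrix.ProjectiveSpecialLinearGroup (Fin 2) (GaloisField p f)))ˣ)
    (haug : aug (↑u : MonoidAlgebra ℤ (Matrix.ProjectiveSpecialLinearGroup (Fin 2) (GaloisField p f))) = 1)
    (hord : orderOf u = n)
    (g₀ : Matrix.ProjectiveSpecialLinearGroup (Fin 2) (GaloisField p f))
    (hg₀ : orderOf g₀ = n)
    (ζ : ℂ) (hζ : IsPrimitiveRoot ζ n)
    (Γ : Finset ℤ)
    (hΓ : ∀ y : ℤ, ∃! x, x ∈ Γ ∧ (x ≡ y [ZMOD n] ∨ x ≡ -y [ZMOD n]))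
    (lam alpha : ℤ → ℂ)
    (hlam : ∀ i : ℤ, lam i =
      ∑ x ∈ Γ,
        ((partialAug (↑u) (g₀ ^ x) : ℤ) : ℂ) * (ζ ^ (i * x) + ζ ^ (-(i * x))))
    (halpha : ∀ i : ℤ, alpha i = ζ ^ i + ζ ^ (-i))
    (d : ℕ) (hd : d ∣ n)
    (hvan : ∀ q' m : ℕ, q'.Prime → 1 ≤ m → q' ^ m ∣ d →
      lam ((d / q' ^ m : ℕ) : ℤ) = alpha ((d / q' ^ m : ℕ) : ℤ)) :
    ∃ r ∈ Algebra.adjoin ℤ ({ζ + ζ⁻¹} : Set ℂ),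
      lam (d : ℤ) - alpha (d : ℤ) = (d : ℂ) * r := by
  classical
  have hn0 : 0 < n := by omega
  have hd0 : 0 < d := Nat.pos_of_dvd_of_pos hd hn0
  have hζ0 : ζ ≠ 0 := hζ.ne_zero hn0.ne'
  -- the coefficients
  set a : ℤ → ℤ := fun x => partialAug (↑u) (g₀ ^ x) with ha
  set nm : ℤ → ℕ := fun t => (t % (n : ℤ)).toNat with hnm
  set h : Polynomial ℤ :=
    (∑ x ∈ Γ, Polynomial.C (a x) * (Polynomial.X ^ nm x + Polynomial.X ^ nm (-x)))
      - (Polynomial.X ^ nm 1 + Polynomial.X ^ nm (-1)) with hh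
  -- evaluation of h at ζ^c
  have heval : ∀ c : ℕ, Polynomial.aeval ((ζ : ℂ) ^ c) h = lam (c : ℤ) - alpha (c : ℤ) := by
    intro c
    have hyn : ((ζ : ℂ) ^ c) ^ n = 1 := by
      rw [← pow_mul, mul_comm, pow_mul, hζ.pow_eq_one, one_pow]
    have key : ∀ t : ℤ, @HPow.hPow ℂ ℕ ℂ _ ((ζ : ℂ) ^ c) (nm t) = ζ ^ ((c : ℤ) * t) := by
      intro t
      simp only [hnm]
      rw [← zpow_int_mod ((ζ : ℂ) ^ c) n hn0 hyn t]
      rw [← zpow_natCast ζ c, ← zpow_mul]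
    rw [hh, map_sub, map_sum, map_add]
    simp only [map_mul, map_add, Polynomial.aeval_C, map_pow, Polynomial.aeval_X]
    simp only [← Polynomial.aeval_X_pow (R := ℤ) (x := (ζ : ℂ) ^ c)]
    simp only [Polynomial.aeval_X_pow]
    rw [hlam ((c : ℕ) : ℤ), halpha ((c : ℕ) : ℤ)]
    congr 1
    · apply Finset.sum_congr rfl
      intro x _
      rw [key x, key (-x)]
      rw [mul_neg]
      rfl
    · rw [key 1, key (-1)]
      rw [mul_one, mul_neg, mul_one]
  -- membership of the difference in ℤ[ζ]
  have hdiffmem : lam (d : ℤ) - alpha (d : ℤ) ∈ Algebra.adjoin ℤ ({ζ} : Set ℂ) := by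
    rw [← heval d]
    have h1 : Polynomial.aeval ((ζ : ℂ) ^ d) h ∈ Algebra.adjoin ℤ ({(ζ : ℂ) ^ d} : Set ℂ) :=
      Polynomial.aeval_mem_adjoin_singleton ℤ _
    have hle : Algebra.adjoin ℤ ({(ζ : ℂ) ^ d} : Set ℂ) ≤ Algebra.adjoin ℤ ({ζ} : Set ℂ) := by
      apply Algebra.adjoin_le
      rw [Set.singleton_subset_iff]
      exact pow_mem (Algebra.subset_adjoin (Set.mem_singleton ζ)) _
    exact hle h1
  -- prime power divisibility
  have hpp : ∀ q k : ℕ, q.Prime → 1 ≤ k → q ^ k ∣ d →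
      ∃ r ∈ Algebra.adjoin ℤ ({ζ} : Set ℂ),
        lam (d : ℤ) - alpha (d : ℤ) = ((q ^ k : ℕ) : ℂ) * r := by
    intro q k hq hk hqk
    set v := d.factorization q with hv
    have hkv : k ≤ v := (Nat.Prime.pow_dvd_iff_le_factorization hq hd0.ne').mp hqk
    have hv1 : 1 ≤ v := le_trans hk hkv
    set e := ordCompl[q] d with he
    have hde : d = q ^ v * e := (Nat.ordProj_mul_ordCompl_eq_self d q).symm
    have hed : e ∣ d := Nat.ordCompl_dvd d q
    have hen : e ∣ n := dvd_trans hed hd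
    have he0 : 0 < e := Nat.ordCompl_pos q hd0.ne'
    set N := n / e with hN
    have hnN : n = e * N := (Nat.mul_div_cancel' hen).symm
    have hN0 : 0 < N := by
      rcases Nat.eq_zero_or_pos N with h' | h'
      · rw [h', mul_zero] at hnN; omega
      · exact h'
    set μ : ℂ := ζ ^ e with hμdef
    have hμ : IsPrimitiveRoot μ N := hζ.pow hn0 hnN
    have hqvN : q ^ v ∣ N := by
      have hdn : e * q ^ v ∣ e * N := by
        rw [← hnN, mul_comm e (q ^ v), ← hde]
        exact hd
      exact (mul_dvd_mul_iff_left he0.ne').mp hdn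
    have hvanh : ∀ j < v, Polynomial.aeval (μ ^ q ^ j) h = 0 := by
      intro j hj
      have hpt : (μ ^ q ^ j : ℂ) = ζ ^ (e * q ^ j) := by
        rw [hμdef, ← pow_mul]
      have hd2 : d = (e * q ^ j) * q ^ (v - j) := by
        have hsplit : q ^ v = q ^ j * q ^ (v - j) := by
          rw [← pow_add]
          congr 1
          omega
        rw [hde, hsplit]
        ring
      have harith : d / q ^ (v - j) = e * q ^ j := by
        rw [hd2, Nat.mul_div_cancel _ (pow_pos hq.pos _)]
      have hvj : q ^ (v - j) ∣ d := ⟨e * q ^ j, by rw [hd2]; ring⟩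
      have := hvan q (v - j) hq (by omega) hvj
      rw [harith] at this
      rw [hpt, heval (e * q ^ j)]
      push_cast at this ⊢
      rw [this, sub_self]
    obtain ⟨s, hsmem, hs⟩ := key_induction v q hq N hN0 hqvN μ hμ h hvanh
    have hptv : (μ ^ q ^ v : ℂ) = ζ ^ d := by
      rw [hμdef, ← pow_mul, hde, mul_comm (q ^ v) e]
    rw [hptv] at hs hsmem
    refine ⟨(q : ℂ) ^ (v - k) * s, ?_, ?_⟩
    · apply mul_mem
      · have : ((q : ℂ)) ^ (v - k) = algebraMap ℤ ℂ ((q : ℤ) ^ (v - k)) := by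
          push_cast; ring
        rw [this]
        exact Subalgebra.algebraMap_mem _ _
      · have hle : Algebra.adjoin ℤ ({(ζ : ℂ) ^ d} : Set ℂ) ≤
            Algebra.adjoin ℤ ({ζ} : Set ℂ) := by
          apply Algebra.adjoin_le
          rw [Set.singleton_subset_iff]
          exact pow_mem (Algebra.subset_adjoin (Set.mem_singleton ζ)) _
        exact hle hsmem
    · rw [← heval d, hs]
      push_cast
      rw [← mul_assoc, ← pow_add]
      congr 2
      omega
  -- combine over all divisors of d
  have hcomb : ∀ k : ℕ, k ∣ d →
      ∃ r ∈ Algebra.adjoin ℤ ({ζ} : Set ℂ),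
        lam (d : ℤ) - alpha (d : ℤ) = (k : ℂ) * r := by
    intro k
    induction k using Nat.recOnPosPrimePosCoprime with
    | prime_pow q k hq hk =>
      intro hdvd
      obtain ⟨r, hr, hr2⟩ := hpp q k hq hk hdvd
      exact ⟨r, hr, by exact_mod_cast hr2⟩
    | zero =>
      intro hdvd
      rw [zero_dvd_iff] at hdvd
      omega
    | one =>
      intro _
      exact ⟨lam (d : ℤ) - alpha (d : ℤ), hdiffmem, by rw [Nat.cast_one, one_mul]⟩
    | coprime a b ha hb hab iha ihb =>
      intro hdvd
      obtain ⟨r₁, hr₁mem, hr₁⟩ := iha (dvd_trans (Dvd.intro b rfl) hdvd)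
      obtain ⟨r₂, hr₂mem, hr₂⟩ := ihb (dvd_trans (Dvd.intro_left a rfl) hdvd)
      have hab' : IsCoprime (a : ℤ) (b : ℤ) := by
        rw [Int.isCoprime_iff_gcd_eq_one]
        exact_mod_cast hab
      obtain ⟨x, y, hxy⟩ := hab'
      refine ⟨x • r₂ + y • r₁, ?_, ?_⟩
      · apply add_mem
        · exact zsmul_mem hr₂mem x
        · exact zsmul_mem hr₁mem y
      · have hc : ((x : ℂ) * a + (y : ℂ) * b) = 1 := by exact_mod_cast hxy
        push_cast
        simp only [zsmul_eq_mul]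
        calc lam (d : ℤ) - alpha (d : ℤ)
            = ((x : ℂ) * a + (y : ℂ) * b) * (lam (d : ℤ) - alpha (d : ℤ)) := by
              rw [hc, one_mul]
          _ = (x : ℂ) * a * ((b : ℂ) * r₂) + (y : ℂ) * b * ((a : ℂ) * r₁) := by
              rw [← hr₁, ← hr₂]; ring
          _ = (↑a * ↑b) * ((x : ℂ) * r₂ + (y : ℂ) * r₁) := by ring
  obtain ⟨r, hrmem, hr⟩ := hcomb d dvd_rfl
  -- Now show r lies in the real subring ℤ[ζ + ζ⁻¹]
  have hn2 : 2 < n := by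
    have h2 : n ≠ 2 := by
      intro hn2'
      rw [hn2'] at hcop
      have h2d : 2 ∣ Nat.gcd 2 (2 * p ^ f) := Nat.dvd_gcd dvd_rfl ⟨p ^ f, rfl⟩
      rw [hcop] at h2d
      omega
    omega
  have habs : ‖ζ‖ = 1 := Complex.norm_eq_one_of_pow_eq_one hζ.pow_eq_one hn0.ne'
  have hconjζ : (starRingEnd ℂ) ζ = ζ⁻¹ := (Complex.inv_eq_conj habs).symm
  have hζinv : ζ * ζ⁻¹ = 1 := mul_inv_cancel₀ hζ0
  set S := Algebra.adjoin ℤ ({ζ + ζ⁻¹} : Set ℂ) with hS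
  -- decomposition lemma
  have hdec : ∀ w ∈ Algebra.adjoin ℤ ({ζ} : Set ℂ),
      ∃ s ∈ S, ∃ t ∈ S, w = s + ζ * t := by
    intro w hw
    induction hw using Algebra.adjoin_induction with
    | mem x hx =>
      rw [Set.mem_singleton_iff] at hx
      subst hx
      exact ⟨0, zero_mem S, 1, one_mem S, by ring⟩
    | algebraMap r =>
      exact ⟨algebraMap ℤ ℂ r, Subalgebra.algebraMap_mem S r, 0, zero_mem S, by ring⟩
    | add x y hx hy ihx ihy =>
      obtain ⟨s₁, hs₁, t₁, ht₁, rfl⟩ := ihx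
      obtain ⟨s₂, hs₂, t₂, ht₂, rfl⟩ := ihy
      exact ⟨s₁ + s₂, add_mem hs₁ hs₂, t₁ + t₂, add_mem ht₁ ht₂, by ring⟩
    | mul x y hx hy ihx ihy =>
      obtain ⟨s₁, hs₁, t₁, ht₁, rfl⟩ := ihx
      obtain ⟨s₂, hs₂, t₂, ht₂, rfl⟩ := ihy
      refine ⟨s₁ * s₂ - t₁ * t₂, sub_mem (mul_mem hs₁ hs₂) (mul_mem ht₁ ht₂),
        s₁ * t₂ + t₁ * s₂ + (ζ + ζ⁻¹) * (t₁ * t₂),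
        add_mem (add_mem (mul_mem hs₁ ht₂) (mul_mem ht₁ hs₂))
          (mul_mem (Algebra.subset_adjoin (Set.mem_singleton _)) (mul_mem ht₁ ht₂)), ?_⟩
      have : ζ * ζ⁻¹ = 1 := hζinv
      linear_combination (-(t₁ * t₂)) * this
  -- conjugation fixes S pointwise
  have hfix : ∀ s ∈ S, (starRingEnd ℂ) s = s := by
    intro s hs
    induction hs using Algebra.adjoin_induction with
    | mem x hx =>
      rw [Set.mem_singleton_iff] at hx
      subst hx
      rw [map_add, hconjζ, map_inv₀, hconjζ, inv_inv, add_comm]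
    | algebraMap r =>
      simp
    | add x y hx hy ihx ihy => rw [map_add, ihx, ihy]
    | mul x y hx hy ihx ihy => rw [map_mul, ihx, ihy]
  -- conjugation fixes lam d - alpha d
  have hconjz : (starRingEnd ℂ) (lam (d : ℤ) - alpha (d : ℤ)) = lam (d : ℤ) - alpha (d : ℤ) := by
    have hconjpow : ∀ t : ℤ, (starRingEnd ℂ) (ζ ^ t) = ζ ^ (-t) := by
      intro t
      rw [map_zpow₀, hconjζ, ← zpow_neg_one, ← zpow_mul, neg_one_mul]
    rw [hlam, halpha, map_sub, map_sum, map_add, hconjpow, hconjpow, neg_neg, add_comm (ζ ^ (-(d : ℤ)))]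
    congr 1
    apply Finset.sum_congr rfl
    intro x _
    rw [map_mul, map_add, hconjpow, hconjpow, neg_neg, map_intCast, add_comm (ζ ^ (-((d : ℤ) * x)))]
  -- deduce that r is fixed by conjugation
  have hdC : ((d : ℕ) : ℂ) ≠ 0 := by exact_mod_cast hd0.ne'
  have hconjr : (starRingEnd ℂ) r = r := by
    have h1 : (starRingEnd ℂ) ((d : ℂ) * r) = (d : ℂ) * (starRingEnd ℂ) r := by
      rw [map_mul, map_natCast]
    have h2 : (d : ℂ) * (starRingEnd ℂ) r = (d : ℂ) * r := by
      rw [← h1, ← hr, hconjz, hr]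
    exact mul_left_cancel₀ hdC h2
  obtain ⟨s, hsS, t, htS, hst⟩ := hdec r hrmem
  have hts : (starRingEnd ℂ) r = s + ζ⁻¹ * t := by
    rw [hst, map_add, map_mul, hconjζ, hfix s hsS, hfix t htS]
  have hζne : ζ ≠ ζ⁻¹ := by
    intro hcontra
    have : ζ ^ (2 : ℕ) = 1 := by
      rw [pow_two]
      nth_rewrite 2 [hcontra]
      exact hζinv
    have hdvd2 := hζ.dvd_of_pow_eq_one 2 this
    have := Nat.le_of_dvd (by norm_num) hdvd2
    omega
  have ht0 : t = 0 := by
    have hζζ : ζ⁻¹ * t = ζ * t := by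
      have h' := hconjr
      rw [hts, hst] at h'
      exact add_left_cancel h'
    have hmul : (ζ - ζ⁻¹) * t = 0 := by
      rw [sub_mul, hζζ, sub_self]
    rcases mul_eq_zero.mp hmul with h' | h'
    · exact absurd (sub_eq_zero.mp h') hζne
    · exact h'
  refine ⟨s, hsS, ?_⟩
  rw [hr, hst, ht0, mul_zero, add_zero]
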